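/- Define z_n := (A_n + i·sign(n)·B)/(A_n² + B²) for nonzero integers n. Then for every natural number m one has |n|^m·|z_{n+1} − z_n| → 0 as n → +∞ and also as n → −∞ (along integers n with n and n+1 both nonzero). -/

import Mathlib

open Complex Filter

/-- `A_n := sign(n)·((R^{2n}+1)/(R^{2n}−1))·α_o + α_i`. -/
noncomputable def Aseq (αi αo R : ℝ) (n : ℤ) : ℝ :=
  (n.sign : ℝ) * ((R ^ (2 * n) + 1) / (R ^ (2 * n) - 1)) * αo + αi

/-- `z_n := (A_n + i·sign(n)·B)/(A_n² + B²)` with `B := β_o − β_i`. -/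
noncomputable def zseq (αi αo βi βo R : ℝ) (n : ℤ) : ℂ :=
  (((Aseq αi αo R n : ℝ) : ℂ) + Complex.I * (n.sign : ℂ) * ((βo - βi : ℝ) : ℂ)) /
    ((Aseq αi αo R n ^ 2 + (βo - βi) ^ 2 : ℝ) : ℂ)

lemma toNat_tendsto : Tendsto Int.toNat atTop atTop := by
  apply tendsto_atTop_atTop.2
  intro b
  exact ⟨(b : ℤ), fun n hn => by omega⟩

lemma ratio_bounds {x : ℝ} (hx : 4 ≤ x) :
    1 ≤ (x+1)/(x-1) ∧ (x+1)/(x-1) ≤ 5/3 := by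
  have h1 : (0:ℝ) < x - 1 := by linarith
  constructor
  · rw [le_div_iff₀ h1]; linarith
  · rw [div_le_iff₀ h1]; linarith

lemma ratio_diff {x y : ℝ} (hx : 4 ≤ x) (hxy : x ≤ y) :
    0 ≤ (x+1)/(x-1) - (y+1)/(y-1) ∧ (x+1)/(x-1) - (y+1)/(y-1) ≤ 4/x := by
  have h1 : (0:ℝ) < x - 1 := by linarith
  have h2 : (0:ℝ) < y - 1 := by linarith
  have h0 : (0:ℝ) < x := by linarith
  constructor
  · rw [sub_nonneg, div_le_div_iff₀ h2 h1]; nlinarith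
  · rw [div_sub_div _ _ (ne_of_gt h1) (ne_of_gt h2), div_le_div_iff₀ (by positivity) h0]
    nlinarith
lemma lip (B α M A A' : ℝ) (hα : 0 < α) (h1 : α ≤ A) (h2 : A ≤ M) (h3 : α ≤ A') (h4 : A' ≤ M) :
    ‖(((A' : ℝ) : ℂ) + Complex.I * ((B : ℝ) : ℂ)) / (((A'^2 + B^2 : ℝ)) : ℂ)
      - (((A : ℝ) : ℂ) + Complex.I * ((B : ℝ) : ℂ)) / (((A^2 + B^2 : ℝ)) : ℂ)‖
    ≤ (B^2 + M^2 + 2 * |B| * M)/α^4 * |A' - A| := by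
  have hA : 0 < A := lt_of_lt_of_le hα h1
  have hA' : 0 < A' := lt_of_lt_of_le hα h3
  have hM : 0 < M := lt_of_lt_of_le hA h2
  have hS : (0:ℝ) < A^2 + B^2 := by positivity
  have hS' : (0:ℝ) < A'^2 + B^2 := by positivity
  have hSc : ((A:ℂ)^2 + (B:ℂ)^2) ≠ 0 := by
    have := Complex.ofReal_ne_zero.2 (ne_of_gt hS); push_cast at this; exact this
  have hS'c : ((A':ℂ)^2 + (B:ℂ)^2) ≠ 0 := by
    have := Complex.ofReal_ne_zero.2 (ne_of_gt hS'); push_cast at this; exact this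
  have key : (((A' : ℝ) : ℂ) + Complex.I * ((B : ℝ) : ℂ)) / (((A'^2 + B^2 : ℝ)) : ℂ)
      - (((A : ℝ) : ℂ) + Complex.I * ((B : ℝ) : ℂ)) / (((A^2 + B^2 : ℝ)) : ℂ)
      = ((((A' - A)*(B^2 - A*A')/((A^2+B^2)*(A'^2+B^2)) : ℝ)) : ℂ)
        + Complex.I * (((-(A' - A)*B*(A+A')/((A^2+B^2)*(A'^2+B^2)) : ℝ)) : ℂ) := by
    push_cast
    field_simp
    ring
  rw [key]
  refine le_trans (norm_add_le _ _) ?_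
  rw [norm_mul, Complex.norm_I, one_mul, Complex.norm_real, Real.norm_eq_abs, Complex.norm_real, Real.norm_eq_abs]
  have a2 : α^2 ≤ A^2 := by nlinarith
  have a2' : α^2 ≤ A'^2 := by nlinarith
  have hden : α^4 ≤ (A^2+B^2)*(A'^2+B^2) := by nlinarith [sq_nonneg B, sq_nonneg α]
  have e1 : |(A' - A)*(B^2 - A*A')/((A^2+B^2)*(A'^2+B^2))|
      ≤ (B^2 + M^2) * |A' - A| / α^4 := by
    rw [abs_div, abs_of_pos (by positivity : (0:ℝ) < (A^2+B^2)*(A'^2+B^2)), abs_mul]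
    apply div_le_div₀ (by positivity) ?_ (by positivity) hden
    have hb : |B^2 - A*A'| ≤ B^2 + M^2 := by
      rw [abs_le]; constructor <;> nlinarith
    calc |A' - A| * |B^2 - A*A'| ≤ |A' - A| * (B^2 + M^2) :=
          mul_le_mul_of_nonneg_left hb (abs_nonneg _)
      _ = (B^2 + M^2) * |A' - A| := by ring
  have e2 : |(-(A' - A)*B*(A+A')/((A^2+B^2)*(A'^2+B^2)))|
      ≤ 2 * |B| * M * |A' - A| / α^4 := by
    rw [abs_div, abs_of_pos (by positivity : (0:ℝ) < (A^2+B^2)*(A'^2+B^2))]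
    have hnum : 0 ≤ 2 * |B| * M * |A' - A| :=
      mul_nonneg (mul_nonneg (mul_nonneg (by norm_num) (abs_nonneg _)) hM.le) (abs_nonneg _)
    apply div_le_div₀ hnum ?_ (by positivity) hden
    have hAA' : |A + A'| ≤ 2*M := by rw [abs_of_pos (by linarith)]; linarith
    calc |(-(A' - A)*B*(A+A'))| = |A' - A| * |B| * |A+A'| := by
          rw [abs_mul, abs_mul, abs_neg]
      _ ≤ |A' - A| * |B| * (2*M) :=
          mul_le_mul_of_nonneg_left hAA' (by positivity)
      _ = 2 * |B| * M * |A' - A| := by ring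
  calc _ ≤ (B^2 + M^2) * |A' - A| / α^4 + 2 * |B| * M * |A' - A| / α^4 := add_le_add e1 e2
    _ = (B^2 + M^2 + 2 * |B| * M)/α^4 * |A' - A| := by ring
set_option maxHeartbeats 1000000 in
lemma core (αi αo βi βo R : ℝ) (hαi : 0 < αi) (hαo : 0 < αo) (hR : 2 ≤ R)
    (k : ℕ) (hk : 1 ≤ k) :
    ‖zseq αi αo βi βo R ((k:ℤ)+1) - zseq αi αo βi βo R (k:ℤ)‖
      ≤ (((βo-βi)^2 + (2*αo+αi)^2 + 2 * |βo - βi| * (2*αo+αi))/(αo+αi)^4 * (4*αo))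
        * ((R^2)⁻¹)^k := by
  have hR0 : (0:ℝ) < R := by linarith
  have hR2 : (4:ℝ) ≤ R^2 := by nlinarith
  set x := (R^2)^k with hx
  set y := (R^2)^(k+1) with hy
  have hx4 : 4 ≤ x := le_trans hR2 (le_self_pow₀ (by nlinarith) (by omega))
  have hxy : x ≤ y := pow_le_pow_right₀ (by nlinarith) (by omega)
  have hy4 : 4 ≤ y := le_trans hx4 hxy
  have hpowx : R ^ (2*(k:ℤ)) = x := by
    have h : (2*(k:ℤ)) = ((2*k:ℕ):ℤ) := by push_cast; ring
    rw [h, zpow_natCast, pow_mul]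
  have hpowy : R ^ (2*((k:ℤ)+1)) = y := by
    have h : (2*((k:ℤ)+1)) = ((2*(k+1):ℕ):ℤ) := by push_cast; ring
    rw [h, zpow_natCast, pow_mul]
  have hsx : ((k:ℤ)).sign = 1 := Int.sign_eq_one_iff_pos.2 (by exact_mod_cast Nat.pos_of_ne_zero (by omega))
  have hsy : ((k:ℤ)+1).sign = 1 := Int.sign_eq_one_iff_pos.2 (by positivity)
  set B := βo - βi with hB
  set Ak := (x+1)/(x-1)*αo + αi with hAkd
  set Ak1 := (y+1)/(y-1)*αo + αi with hAk1d
  have hAk : Aseq αi αo R (k:ℤ) = Ak := by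
    unfold Aseq; rw [hsx, hpowx]; push_cast; ring
  have hAk1 : Aseq αi αo R ((k:ℤ)+1) = Ak1 := by
    unfold Aseq; rw [hsy, hpowy]; push_cast; ring
  have hz1 : zseq αi αo βi βo R (k:ℤ)
      = (((Ak : ℝ) : ℂ) + Complex.I * ((B : ℝ) : ℂ)) / (((Ak^2 + B^2 : ℝ)) : ℂ) := by
    simp only [zseq, hAk, hsx]; rw [hB]; push_cast; ring
  have hz2 : zseq αi αo βi βo R ((k:ℤ)+1)
      = (((Ak1 : ℝ) : ℂ) + Complex.I * ((B : ℝ) : ℂ)) / (((Ak1^2 + B^2 : ℝ)) : ℂ) := by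
    simp only [zseq, hAk1, hsy]; rw [hB]; push_cast; ring
  obtain ⟨hl, hu⟩ := ratio_bounds hx4
  obtain ⟨hl', hu'⟩ := ratio_bounds hy4
  obtain ⟨hd0, hd4⟩ := ratio_diff hx4 hxy
  have hα : (0:ℝ) < αo + αi := by linarith
  have b1 : αo + αi ≤ Ak := by rw [hAkd]; nlinarith
  have b2 : Ak ≤ 2*αo + αi := by rw [hAkd]; nlinarith
  have b3 : αo + αi ≤ Ak1 := by rw [hAk1d]; nlinarith
  have b4 : Ak1 ≤ 2*αo + αi := by rw [hAk1d]; nlinarith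
  rw [hz1, hz2]
  refine le_trans (lip B (αo+αi) (2*αo+αi) Ak Ak1 hα b1 b2 b3 b4) ?_
  have hdiff : |Ak1 - Ak| ≤ 4*αo * ((R^2)⁻¹)^k := by
    have h1 : Ak1 - Ak = -(((x+1)/(x-1) - (y+1)/(y-1))*αo) := by
      rw [hAkd, hAk1d]; ring
    have h2' : 0 ≤ ((x+1)/(x-1) - (y+1)/(y-1))*αo := mul_nonneg hd0 hαo.le
    rw [h1, abs_neg, _root_.abs_of_nonneg h2']
    have h2 : ((x+1)/(x-1) - (y+1)/(y-1))*αo ≤ (4/x)*αo :=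
      mul_le_mul_of_nonneg_right hd4 hαo.le
    refine le_trans h2 (le_of_eq ?_)
    rw [hx, ← inv_pow, div_eq_mul_inv, inv_pow]
    ring
  have hC0 : 0 ≤ (B^2 + (2*αo+αi)^2 + 2 * |B| * (2*αo+αi))/(αo+αi)^4 := by
    apply div_nonneg _ (by positivity)
    nlinarith [abs_nonneg B, sq_nonneg B, sq_nonneg (2*αo+αi)]
  calc (B^2 + (2*αo+αi)^2 + 2 * |B| * (2*αo+αi))/(αo+αi)^4 * |Ak1 - Ak|
      ≤ (B^2 + (2*αo+αi)^2 + 2 * |B| * (2*αo+αi))/(αo+αi)^4 * (4*αo * ((R^2)⁻¹)^k) :=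
        mul_le_mul_of_nonneg_left hdiff hC0
    _ = ((B^2 + (2*αo+αi)^2 + 2 * |B| * (2*αo+αi))/(αo+αi)^4 * (4*αo)) * ((R^2)⁻¹)^k := by
        ring
lemma Aseq_neg (αi αo R : ℝ) (hR : 2 ≤ R) (n : ℤ) : Aseq αi αo R (-n) = Aseq αi αo R n := by
  rcases eq_or_ne n 0 with rfl | hn
  · simp
  have hR0 : (0:ℝ) < R := by linarith
  set x := R ^ (2*n) with hxd
  have hx0 : 0 < x := zpow_pos hR0 _
  have hinv : R ^ (2*(-n)) = x⁻¹ := by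
    rw [hxd, ← zpow_neg]; ring_nf
  have hratio : (x⁻¹+1)/(x⁻¹-1) = -((x+1)/(x-1)) := by
    rcases eq_or_ne x 1 with h1 | h1
    · simp [h1]
    have hx1 : x - 1 ≠ 0 := sub_ne_zero.2 h1
    have hxi1 : x⁻¹ - 1 ≠ 0 := by
      intro hc
      apply h1
      have : x⁻¹ = 1 := by linarith
      simpa using congrArg (·⁻¹) this
    have hx1' : (1:ℝ) - x ≠ 0 := fun hc => h1 (by linarith)
    field_simp
    ring
  unfold Aseq
  rw [hinv, Int.sign_neg, hratio]
  push_cast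
  ring

lemma zseq_neg (αi αo βi βo R : ℝ) (hR : 2 ≤ R) (n : ℤ) :
    zseq αi αo βi βo R (-n) = (starRingEnd ℂ) (zseq αi αo βi βo R n) := by
  unfold zseq
  rw [Aseq_neg αi αo R hR n, Int.sign_neg]
  simp only [map_div₀, map_add, map_mul, Complex.conj_I, Complex.conj_ofReal, map_intCast]
  push_cast
  ring

/-- For every natural number `m` one has `|n|^m·|z_{n+1} − z_n| → 0`
as `n → +∞` and as `n → −∞`. -/
theorem statement9 (αi αo βi βo R : ℝ)
    (hαi : 0 < αi) (hαo : 0 < αo) (hβi : 0 ≤ βi) (hβo : 0 ≤ βo) (hR : 2 ≤ R) :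
    ∀ m : ℕ,
      Tendsto (fun n : ℤ =>
          (|n| : ℝ) ^ m * ‖zseq αi αo βi βo R (n + 1) - zseq αi αo βi βo R n‖)
        atTop (nhds 0)
      ∧ Tendsto (fun n : ℤ =>
          (|n| : ℝ) ^ m * ‖zseq αi αo βi βo R (n + 1) - zseq αi αo βi βo R n‖)
        atBot (nhds 0) := by
  intro m
  have hαsum : (0:ℝ) < αo + αi := by linarith
  set C := ((βo-βi)^2 + (2*αo+αi)^2 + 2 * |βo - βi| * (2*αo+αi))/(αo+αi)^4 * (4*αo)
    with hCdef
  have hC0 : 0 ≤ C := by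
    have hnum : 0 ≤ (βo-βi)^2 + (2*αo+αi)^2 + 2 * |βo - βi| * (2*αo+αi) := by
      nlinarith [abs_nonneg (βo-βi), sq_nonneg (βo-βi), sq_nonneg (2*αo+αi)]
    exact mul_nonneg (div_nonneg hnum (by positivity)) (by linarith)
  set r := (R^2)⁻¹ with hrdef
  have hR2 : (4:ℝ) ≤ R^2 := by nlinarith
  have hr0 : 0 < r := by rw [hrdef]; positivity
  have hr1 : |r| < 1 := by
    rw [_root_.abs_of_pos hr0, hrdef]
    exact inv_lt_one_of_one_lt₀ (by linarith)
  have hcore : ∀ k : ℕ, 1 ≤ k →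
      ‖zseq αi αo βi βo R ((k:ℤ)+1) - zseq αi αo βi βo R (k:ℤ)‖ ≤ C * r^k :=
    fun k hk => core αi αo βi βo R hαi hαo hR k hk
  have hnn : ∀ n : ℤ, 0 ≤ (|n| : ℝ)^m *
      ‖zseq αi αo βi βo R (n+1) - zseq αi αo βi βo R n‖ :=
    fun n => mul_nonneg (pow_nonneg (abs_nonneg _) m) (norm_nonneg _)
  constructor
  · have hψ : Tendsto (fun k : ℕ => C * ((k:ℝ)^m * r^k)) atTop (nhds 0) := by
      have h := (tendsto_pow_const_mul_const_pow_of_abs_lt_one m hr1).const_mul C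
      rw [mul_zero] at h
      exact h
    have hg : Tendsto (fun n : ℤ => C * (((n.toNat:ℝ))^m * r^(n.toNat))) atTop (nhds 0) :=
      hψ.comp toNat_tendsto
    apply squeeze_zero' (Eventually.of_forall hnn) ?_ hg
    filter_upwards [eventually_ge_atTop (1:ℤ)] with n hn
    have hnt : ((n.toNat : ℤ)) = n := Int.toNat_of_nonneg (by omega)
    have hk1 : 1 ≤ n.toNat := by omega
    have hb := hcore n.toNat hk1
    rw [hnt] at hb
    have habs : |(n:ℝ)| = ((n.toNat : ℝ)) := by
      have h0 : (0:ℤ) ≤ n := by omega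
      rw [_root_.abs_of_nonneg (by exact_mod_cast h0 : (0:ℝ) ≤ (n:ℝ))]
      exact_mod_cast hnt.symm
    rw [habs]
    calc ((n.toNat : ℝ))^m * ‖zseq αi αo βi βo R (n+1) - zseq αi αo βi βo R n‖
        ≤ ((n.toNat : ℝ))^m * (C * r^(n.toNat)) :=
          mul_le_mul_of_nonneg_left hb (by positivity)
      _ = C * (((n.toNat:ℝ))^m * r^(n.toNat)) := by ring
  · have hφ : Tendsto (fun j : ℕ => C * (((j:ℝ)+1)^m * r^j)) atTop (nhds 0) := by
      have h1 : Tendsto (fun j : ℕ => (((j+1:ℕ)):ℝ)^m * r^((j+1:ℕ))) atTop (nhds 0) :=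
        (tendsto_pow_const_mul_const_pow_of_abs_lt_one m hr1).comp (tendsto_add_atTop_nat 1)
      have h2 := h1.const_mul (C/r)
      rw [mul_zero] at h2
      apply h2.congr
      intro j
      have hrne : r ≠ 0 := ne_of_gt hr0
      push_cast
      rw [pow_succ]
      field_simp
    have hmap : Tendsto (fun n : ℤ => (-n-1).toNat) atBot atTop := by
      apply tendsto_atTop.2
      intro b
      apply eventually_atBot.2
      exact ⟨-(b:ℤ)-1, fun n hn => by omega⟩
    have hg : Tendsto (fun n : ℤ => C * ((((-n-1).toNat:ℝ)+1)^m * r^((-n-1).toNat)))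
        atBot (nhds 0) := hφ.comp hmap
    apply squeeze_zero' (Eventually.of_forall hnn) ?_ hg
    filter_upwards [eventually_le_atBot (-2 : ℤ)] with n hn
    set j := (-n-1).toNat with hj
    have hjz : ((j:ℤ)) = -n-1 := by omega
    have hj1 : 1 ≤ j := by omega
    have e1 : zseq αi αo βi βo R (n+1) = (starRingEnd ℂ) (zseq αi αo βi βo R (j:ℤ)) := by
      rw [← zseq_neg αi αo βi βo R hR (j:ℤ)]; congr 1; omega
    have e2 : zseq αi αo βi βo R n = (starRingEnd ℂ) (zseq αi αo βi βo R ((j:ℤ)+1)) := by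
      rw [← zseq_neg αi αo βi βo R hR ((j:ℤ)+1)]; congr 1; omega
    have habs : ‖zseq αi αo βi βo R (n+1) - zseq αi αo βi βo R n‖
        = ‖zseq αi αo βi βo R ((j:ℤ)+1) - zseq αi αo βi βo R (j:ℤ)‖ := by
      rw [e1, e2, ← map_sub, Complex.norm_conj]
      exact norm_sub_rev _ _
    have hB : |(n:ℝ)| = (j:ℝ)+1 := by
      have h0 : (n:ℝ) ≤ 0 := by exact_mod_cast (by omega : n ≤ (0:ℤ))
      rw [_root_.abs_of_nonpos h0]
      have h1 : -n = (j:ℤ)+1 := by omega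
      exact_mod_cast h1
    rw [habs, hB]
    calc ((j:ℝ)+1)^m * ‖zseq αi αo βi βo R ((j:ℤ)+1) - zseq αi αo βi βo R (j:ℤ)‖
        ≤ ((j:ℝ)+1)^m * (C * r^j) :=
          mul_le_mul_of_nonneg_left (hcore j hj1) (by positivity)
      _ = C * (((j:ℝ)+1)^m * r^j) := by ring
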